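/- Let H be a subgroup of S_m × S_n (m ≤ n, 2 ≤ m, 5 ≤ n, (m,n) ≠ (6,6)) with both projections surjective and acting transitively on {0,...,m-1} × {0,...,n-1}. Then H acts transitively on the set of unordered pairs {(i,j), (k,ℓ)} with i ≠ k and j ≠ ℓ; it acts transitively on the set of unordered pairs {(i,j), (i,ℓ)} with j ≠ ℓ; and it acts transitively on the set of unordered pairs {(i,j), (k,j)} with i ≠ k. -/

import Mathlib

open Equiv Equiv.Perm Subgroup

section Stmt10Aux
variable {β : Type*} [DecidableEq β] [Fintype β]


lemma exists_fresh {n : ℕ} (s : Finset (Fin n)) (h : s.card < n) : ∃ x, x ∉ s := by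
  by_contra hc
  push_neg at hc
  have : s = Finset.univ := Finset.eq_univ_iff_forall.mpr hc
  rw [this, Finset.card_univ, Fintype.card_fin] at h
  omega

lemma exists_two_points (a b a' b' : β) (hab : a ≠ b) (h'ab : a' ≠ b') :
    ∃ σ : Perm β, σ a = a' ∧ σ b = b' := by
  refine ⟨swap (swap a a' b) b' * swap a a', ?_, ?_⟩
  · rw [mul_apply, swap_apply_left]
    refine swap_apply_of_ne_of_ne (fun hh : a' = swap a a' b => ?_) h'ab
    exact hab (Equiv.injective (swap a a') (by rwa [swap_apply_left]))
  · rw [mul_apply, swap_apply_left]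

lemma eq_swap_of (σ : Perm β) (a b : β) (hab : a ≠ b) (hσa : σ a = b)
    (h : ∀ z, z ≠ a → z ≠ b → σ z = z) : σ = swap a b := by
  have h1 : σ b ≠ b := fun h1 => hab (σ.injective (hσa.trans h1.symm))
  have hσb : σ b = a := by
    by_contra h2
    exact h1 (σ.injective (h (σ b) h2 h1))
  ext z
  rcases eq_or_ne z a with rfl | hza
  · simp [hσa]
  rcases eq_or_ne z b with rfl | hzb
  · simp [hσb]
  · rw [h z hza hzb, swap_apply_of_ne_of_ne hza hzb]

lemma isSwap_of_isConj {σ τ : Perm β} (h : IsConj σ τ) (hσ : IsSwap σ) : IsSwap τ := by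
  obtain ⟨x, y, hxy, rfl⟩ := hσ
  obtain ⟨c, hc⟩ := isConj_iff.mp h
  exact ⟨c x, c y, fun he => hxy (c.injective he), by rw [← hc, ← swap_apply_apply]⟩

lemma cube_eq_one {a b c : β} (hab : a ≠ b) (hac : a ≠ c) (hbc : b ≠ c) :
    (swap a b * swap a c) ^ 3 = 1 := by
  set s := swap a b * swap a c with hs
  have hsa : s a = c := by
    rw [hs, mul_apply, swap_apply_left, swap_apply_of_ne_of_ne (Ne.symm hac) (Ne.symm hbc)]
  have hsc : s c = b := by
    rw [hs, mul_apply, swap_apply_right, swap_apply_left]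
  have hsb : s b = a := by
    rw [hs, mul_apply, swap_apply_of_ne_of_ne (Ne.symm hab) hbc, swap_apply_right]
  have hfix : ∀ z, z ≠ a → z ≠ b → z ≠ c → s z = z := fun z hza hzb hzc => by
    rw [hs, mul_apply, swap_apply_of_ne_of_ne hza hzc, swap_apply_of_ne_of_ne hza hzb]
  ext z
  have h3 : (s ^ 3) z = s (s (s z)) := by
    rw [pow_succ, pow_succ, pow_one, mul_apply, mul_apply]
  rw [h3, Perm.one_apply]
  rcases eq_or_ne z a with rfl | hza
  · rw [hsa, hsc, hsb]
  rcases eq_or_ne z b with rfl | hzb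
  · rw [hsb, hsa, hsc]
  rcases eq_or_ne z c with rfl | hzc
  · rw [hsc, hsb, hsa]
  · rw [hfix z hza hzb hzc, hfix z hza hzb hzc, hfix z hza hzb hzc]

lemma disjoint_swap_commute {a b c d : β} (hca : c ≠ a) (hcb : c ≠ b) (hda : d ≠ a)
    (hdb : d ≠ b) : Commute (swap a b) (swap c d) := by
  apply Equiv.Perm.Disjoint.commute
  intro x
  by_cases hxa : x = a
  · subst hxa; right; exact swap_apply_of_ne_of_ne (Ne.symm hca) (Ne.symm hda)
  by_cases hxb : x = b
  · subst hxb; right; exact swap_apply_of_ne_of_ne (Ne.symm hcb) (Ne.symm hdb)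
  · left; exact swap_apply_of_ne_of_ne hxa hxb

lemma pos_swap {s t : Perm β} (hs : IsSwap s) (ht : IsSwap t) :
    (s * t) ^ 2 = 1 ∨ (s * t) ^ 3 = 1 := by
  obtain ⟨a, b, hab, rfl⟩ := hs
  obtain ⟨c, d, hcd, rfl⟩ := ht
  by_cases hca : c = a
  · by_cases hdb : d = b
    · rw [hca, hdb]
      left
      rw [pow_two, ← mul_assoc, mul_assoc (swap a b), swap_mul_self, mul_one, swap_mul_self]
    · rw [hca]
      right
      exact cube_eq_one hab (fun h => hcd (hca.trans h)) (fun h => hdb h.symm)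
  by_cases hcb : c = b
  · by_cases hda : d = a
    · rw [hcb, hda, swap_comm b a]
      left
      rw [pow_two, ← mul_assoc, mul_assoc (swap a b), swap_mul_self, mul_one, swap_mul_self]
    · rw [hcb, swap_comm a b]
      right
      exact cube_eq_one (Ne.symm hab) (fun h => hcd (hcb.trans h)) (fun h => hda h.symm)
  by_cases hda : d = a
  · rw [hda, swap_comm c a]
    right
    exact cube_eq_one hab (Ne.symm hca) (Ne.symm hcb)
  by_cases hdb : d = b
  · rw [hdb, swap_comm a b, swap_comm c b]
    right
    exact cube_eq_one (Ne.symm hab) (Ne.symm hcb) (Ne.symm hca)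
  · left
    have hc := disjoint_swap_commute hca hcb hda hdb
    rw [pow_two, mul_assoc, ← mul_assoc (swap c d), ← hc.eq, mul_assoc, swap_mul_self, mul_one,
      swap_mul_self]


lemma bad {n : ℕ} (hn5 : 5 ≤ n) (hn6 : n ≠ 6) {σ : Perm (Fin n)} (hinv : σ * σ = 1)
    (hne : σ ≠ 1) (hns : ¬ IsSwap σ) :
    ∃ σ', IsConj σ σ' ∧ (σ * σ') ^ 2 ≠ 1 ∧ (σ * σ') ^ 3 ≠ 1 := by
  have hinvol : ∀ x, σ (σ x) = x := fun x => by
    have := congrArg (fun τ : Perm (Fin n) => τ x) hinv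
    simpa [mul_apply] using this
  obtain ⟨a, ha⟩ : ∃ a, σ a ≠ a := by
    by_contra hcon
    push_neg at hcon
    exact hne (Equiv.ext fun x => (hcon x).trans (Perm.one_apply x).symm)
  obtain ⟨b, hb⟩ : ∃ b, σ a = b := ⟨σ a, rfl⟩
  have hba : σ b = a := by rw [← hb]; exact hinvol a
  have hab : a ≠ b := fun h => ha (by rw [hb, ← h])
  obtain ⟨c, hca, hcb, hc⟩ : ∃ c, c ≠ a ∧ c ≠ b ∧ σ c ≠ c := by
    by_contra hcon
    push_neg at hcon
    exact hns ⟨a, b, hab, eq_swap_of σ a b hab hb (fun z hza hzb => hcon z hza hzb)⟩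
  obtain ⟨d, hd⟩ : ∃ d, σ c = d := ⟨σ c, rfl⟩
  have hdc : σ d = c := by rw [← hd]; exact hinvol c
  have hdc' : d ≠ c := fun h => hc (by rw [hd, h])
  have hda : d ≠ a := fun h => hcb (by rw [← hdc, h, hb])
  have hdb : d ≠ b := fun h => hca (by rw [← hdc, h, hba])
  by_cases hfix : ∃ e, σ e = e
  · -- case with a fixed point
    obtain ⟨e, he⟩ := hfix
    have hea : e ≠ a := fun h => ha (by rw [← h, he])
    have heb : e ≠ b := fun h => hab (hba.symm.trans (h ▸ he))
    have hec : e ≠ c := fun h => hc (by rw [← h, he])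
    have hed : e ≠ d := fun h => hdc' (hdc.symm.trans (h ▸ he)).symm
    have u_a : (swap a c * swap c e) a = c := by
      rw [mul_apply, swap_apply_of_ne_of_ne (Ne.symm hca) (Ne.symm hea), swap_apply_left]
    have u_c : (swap a c * swap c e) c = e := by
      rw [mul_apply, swap_apply_left, swap_apply_of_ne_of_ne hea hec]
    have u_e : (swap a c * swap c e) e = a := by
      rw [mul_apply, swap_apply_right, swap_apply_right]
    have u_b : (swap a c * swap c e) b = b := by
      rw [mul_apply, swap_apply_of_ne_of_ne (Ne.symm hcb) (Ne.symm heb),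
        swap_apply_of_ne_of_ne (Ne.symm hab) (Ne.symm hcb)]
    have u_d : (swap a c * swap c e) d = d := by
      rw [mul_apply, swap_apply_of_ne_of_ne hdc' (Ne.symm hed),
        swap_apply_of_ne_of_ne hda hdc']
    set u : Perm (Fin n) := swap a c * swap c e with hu
    refine ⟨u * σ * u⁻¹, isConj_iff.mpr ⟨u, rfl⟩, ?_, ?_⟩ <;>
      [skip; skip] <;> intro hcontra
    all_goals {
      have key : ∀ x : Fin n, (σ * (u * σ * u⁻¹)) x = σ (u (σ (u⁻¹ x))) := fun x => by
        simp [mul_apply]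
      have hSa : (σ * (u * σ * u⁻¹)) a = b := by
        rw [key, Perm.inv_eq_iff_eq.mpr u_e.symm, he, u_e, hb]
      have hSb : (σ * (u * σ * u⁻¹)) b = d := by
        rw [key, Perm.inv_eq_iff_eq.mpr u_b.symm, hba, u_a, hd]
      have hSd : (σ * (u * σ * u⁻¹)) d = e := by
        rw [key, Perm.inv_eq_iff_eq.mpr u_d.symm, hdc, u_c, he]
      have := congrArg (fun τ : Perm (Fin n) => τ a) hcontra
      simp only [Perm.one_apply] at this
      first
      | (rw [pow_two, mul_apply, hSa, hSb] at this; exact hda this)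
      | (rw [pow_succ, pow_succ, pow_one, mul_apply, mul_apply, hSa, hSb, hSd] at this
         exact hea this)
    }
  · -- no fixed point
    push_neg at hfix
    have hsupp : σ.support = Finset.univ :=
      Finset.eq_univ_iff_forall.mpr (fun x => Perm.mem_support.mpr (hfix x))
    have horder : orderOf σ ∣ 2 := orderOf_dvd_of_pow_eq_one (by rw [pow_two]; exact hinv)
    have hct : ∀ p ∈ σ.cycleType, p = 2 := fun p hp =>
      le_antisymm (Nat.le_of_dvd two_pos ((Multiset.dvd_lcm hp).trans
        (by rw [lcm_cycleType]; exact horder))) (two_le_of_mem_cycleType hp)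
    have hsum : σ.cycleType.sum = n := by
      rw [sum_cycleType, hsupp, Finset.card_univ, Fintype.card_fin]
    obtain ⟨k, hk⟩ : ∃ k, σ.cycleType = Multiset.replicate k 2 :=
      ⟨_, Multiset.eq_replicate_card.mpr hct⟩
    have heven : n = 2 * k := by
      rw [← hsum, hk, Multiset.sum_replicate, smul_eq_mul, mul_comm]
    have hn8 : 8 ≤ n := by omega
    have hcard4 : ({a, b, c, d} : Finset (Fin n)).card < n := by
      have k1 := Finset.card_insert_le a ({b, c, d} : Finset (Fin n))
      have k2 := Finset.card_insert_le b ({c, d} : Finset (Fin n))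
      have k3 := Finset.card_insert_le c ({d} : Finset (Fin n))
      simp only [Finset.card_singleton] at k1 k2 k3
      omega
    obtain ⟨e, hemem⟩ := exists_fresh _ hcard4
    simp only [Finset.mem_insert, Finset.mem_singleton, not_or] at hemem
    obtain ⟨hea', heb', hec', hed'⟩ := hemem
    have hea : e ≠ a := hea'
    have heb : e ≠ b := heb'
    have hec : e ≠ c := hec'
    have hed : e ≠ d := hed'
    obtain ⟨f, hf⟩ : ∃ f, σ e = f := ⟨σ e, rfl⟩
    have hfe : σ f = e := by rw [← hf]; exact hinvol e
    have hfe' : f ≠ e := fun h => hfix e (by rw [hf, h])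
    have hfa : f ≠ a := fun h => heb (by rw [← hfe, h, hb])
    have hfb : f ≠ b := fun h => hea (by rw [← hfe, h, hba])
    have hfc : f ≠ c := fun h => hed (by rw [← hfe, h, hd])
    have hfd : f ≠ d := fun h => hec (by rw [← hfe, h, hdc])
    have hcard6 : ({a, b, c, d, e, f} : Finset (Fin n)).card < n := by
      have k1 := Finset.card_insert_le a ({b, c, d, e, f} : Finset (Fin n))
      have k2 := Finset.card_insert_le b ({c, d, e, f} : Finset (Fin n))
      have k3 := Finset.card_insert_le c ({d, e, f} : Finset (Fin n))
      have k4 := Finset.card_insert_le d ({e, f} : Finset (Fin n))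
      have k5 := Finset.card_insert_le e ({f} : Finset (Fin n))
      simp only [Finset.card_singleton] at k1 k2 k3 k4 k5
      omega
    obtain ⟨g, hgmem⟩ := exists_fresh _ hcard6
    simp only [Finset.mem_insert, Finset.mem_singleton, not_or] at hgmem
    obtain ⟨hga, hgb, hgc, hgd, hge, hgf⟩ := hgmem
    obtain ⟨i, hi⟩ : ∃ i, σ g = i := ⟨σ g, rfl⟩
    have hig : σ i = g := by rw [← hi]; exact hinvol g
    have hig' : i ≠ g := fun h => hfix g (by rw [hi, h])
    have hia : i ≠ a := fun h => hgb (by rw [← hig, h, hb])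
    have hib : i ≠ b := fun h => hga (by rw [← hig, h, hba])
    have hic : i ≠ c := fun h => hgd (by rw [← hig, h, hd])
    have hid : i ≠ d := fun h => hgc (by rw [← hig, h, hdc])
    have hie : i ≠ e := fun h => hgf (by rw [← hig, h, hf])
    have hif : i ≠ f := fun h => hge (by rw [← hig, h, hfe])
    -- u is the 4-cycle (a c e g)
    have u_a : (swap a c * swap c e * swap e g) a = c := by
      rw [mul_apply, mul_apply, swap_apply_of_ne_of_ne (Ne.symm hea) (fun h => hga h.symm),
        swap_apply_of_ne_of_ne (Ne.symm hca) (Ne.symm hea), swap_apply_left]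
    have u_c : (swap a c * swap c e * swap e g) c = e := by
      rw [mul_apply, mul_apply, swap_apply_of_ne_of_ne (Ne.symm hec) (fun h => hgc h.symm),
        swap_apply_left, swap_apply_of_ne_of_ne hea hec]
    have u_e : (swap a c * swap c e * swap e g) e = g := by
      rw [mul_apply, mul_apply, swap_apply_left, swap_apply_of_ne_of_ne hgc hge,
        swap_apply_of_ne_of_ne hga hgc]
    have u_g : (swap a c * swap c e * swap e g) g = a := by
      rw [mul_apply, mul_apply, swap_apply_right, swap_apply_right, swap_apply_right]
    have u_d : (swap a c * swap c e * swap e g) d = d := by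
      rw [mul_apply, mul_apply, swap_apply_of_ne_of_ne (Ne.symm hed) (fun h => hgd h.symm),
        swap_apply_of_ne_of_ne hdc' (Ne.symm hed), swap_apply_of_ne_of_ne hda hdc']
    have u_f : (swap a c * swap c e * swap e g) f = f := by
      rw [mul_apply, mul_apply, swap_apply_of_ne_of_ne hfe' (fun h => hgf h.symm),
        swap_apply_of_ne_of_ne hfc hfe', swap_apply_of_ne_of_ne hfa hfc]
    have u_i : (swap a c * swap c e * swap e g) i = i := by
      rw [mul_apply, mul_apply, swap_apply_of_ne_of_ne hie hig',
        swap_apply_of_ne_of_ne hic hie, swap_apply_of_ne_of_ne hia hic]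
    set u : Perm (Fin n) := swap a c * swap c e * swap e g with hu
    refine ⟨u * σ * u⁻¹, isConj_iff.mpr ⟨u, rfl⟩, ?_, ?_⟩ <;>
      [skip; skip] <;> intro hcontra
    all_goals {
      have key : ∀ x : Fin n, (σ * (u * σ * u⁻¹)) x = σ (u (σ (u⁻¹ x))) := fun x => by
        simp [mul_apply]
      have hSa : (σ * (u * σ * u⁻¹)) a = g := by
        rw [key, Perm.inv_eq_iff_eq.mpr u_g.symm, hi, u_i, hig]
      have hSg : (σ * (u * σ * u⁻¹)) g = e := by
        rw [key, Perm.inv_eq_iff_eq.mpr u_e.symm, hf, u_f, hfe]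
      have hSe : (σ * (u * σ * u⁻¹)) e = c := by
        rw [key, Perm.inv_eq_iff_eq.mpr u_c.symm, hd, u_d, hdc]
      have := congrArg (fun τ : Perm (Fin n) => τ a) hcontra
      simp only [Perm.one_apply] at this
      first
      | (rw [pow_two, mul_apply, hSa, hSg] at this; exact hea this)
      | (rw [pow_succ, pow_succ, pow_one, mul_apply, mul_apply, hSa, hSg, hSe] at this
         exact hca this)
    }


lemma keyswap {n : ℕ} (hn5 : 5 ≤ n) (hn6 : n ≠ 6) (f : Perm (Fin n) ≃* Perm (Fin n))
    {t : Perm (Fin n)} (ht : IsSwap t) : IsSwap (f t) := by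
  by_contra hns
  obtain ⟨x, y, hxy, htxy⟩ := ht
  have hinv : f t * f t = 1 := by rw [← map_mul, htxy, swap_mul_self, map_one]
  have hne : f t ≠ 1 := by
    intro h
    have : t = 1 := f.injective (h.trans (map_one f).symm)
    rw [htxy] at this
    exact hxy (swap_eq_one_iff.mp this)
  obtain ⟨σ', hconj, h2, h3⟩ := bad hn5 hn6 hinv hne hns
  have hconj' : IsConj t (f.symm σ') := by
    have := f.symm.toMonoidHom.map_isConj hconj
    simpa using this
  have ht' : IsSwap (f.symm σ') := isSwap_of_isConj hconj' ⟨x, y, hxy, htxy⟩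
  rcases pos_swap ⟨x, y, hxy, htxy⟩ ht' with h | h
  · apply h2
    have := congrArg f h
    rwa [map_pow, map_mul, MulEquiv.apply_symm_apply, map_one] at this
  · apply h3
    have := congrArg f h
    rwa [map_pow, map_mul, MulEquiv.apply_symm_apply, map_one] at this

lemma normal_alternating_le {n : ℕ} (hn5 : 5 ≤ n) (N : Subgroup (Perm (Fin n))) (hN : N.Normal)
    {σ : Perm (Fin n)} (hσN : σ ∈ N) (hσ1 : σ ≠ 1) : alternatingGroup (Fin n) ≤ N := by
  obtain ⟨a, ha⟩ : ∃ a, σ a ≠ a := by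
    by_contra hcon
    push_neg at hcon
    exact hσ1 (Equiv.ext fun z => (hcon z).trans (Perm.one_apply z).symm)
  obtain ⟨b, hb⟩ : ∃ b, σ a = b := ⟨σ a, rfl⟩
  have hab : a ≠ b := fun h => ha (by rw [hb, ← h])
  have h3 : ∃ c ∈ N, IsThreeCycle c := by
    by_cases hz : ∃ z, z ≠ a ∧ z ≠ b ∧ σ z ≠ z
    · obtain ⟨z, hza, hzb, hz'⟩ := hz
      obtain ⟨w, hw⟩ : ∃ w, σ⁻¹ z = w := ⟨σ⁻¹ z, rfl⟩
      have hwz : σ w = z := by rw [← hw]; simp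
      have hwa : w ≠ a := fun h => hzb (by rw [← hwz, h, hb])
      have hwz' : w ≠ z := fun h => hz' (h ▸ hwz)
      have hδmem : σ⁻¹ * (swap b z * σ * (swap b z)⁻¹) ∈ N :=
        mul_mem (inv_mem hσN) (hN.conj_mem σ hσN (swap b z))
      have hδeq : σ⁻¹ * (swap b z * σ * (swap b z)⁻¹) = swap a w * swap b z := by
        rw [swap_inv]
        have h1 : swap a w = σ⁻¹ * swap b z * σ := by
          have := swap_apply_apply σ⁻¹ b z
          rw [inv_inv] at this
          rw [show σ⁻¹ b = a from Perm.inv_eq_iff_eq.mpr hb.symm, hw] at this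
          exact this
        rw [h1]
        group
      by_cases hwb : w = b
      · refine ⟨swap a w * swap b z, hδeq ▸ hδmem, ?_⟩
        rw [hwb, swap_comm a b]
        exact isThreeCycle_swap_mul_swap_same (Ne.symm hab) (Ne.symm hzb) (Ne.symm hza)
      · -- 2+2 case
        obtain ⟨e, hemem⟩ : ∃ e, e ∉ ({a, w, b, z} : Finset (Fin n)) := by
          apply exists_fresh
          have k1 := Finset.card_insert_le a ({w, b, z} : Finset (Fin n))
          have k2 := Finset.card_insert_le w ({b, z} : Finset (Fin n))
          have k3 := Finset.card_insert_le b ({z} : Finset (Fin n))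
          simp only [Finset.card_singleton] at k1 k2 k3
          omega
        simp only [Finset.mem_insert, Finset.mem_singleton, not_or] at hemem
        obtain ⟨hea, hew, heb, hez⟩ := hemem
        have hδ'mem : swap z e * (swap a w * swap b z) * (swap z e)⁻¹ ∈ N :=
          hN.conj_mem _ (hδeq ▸ hδmem) (swap z e)
        have hδ'eq : swap z e * (swap a w * swap b z) * (swap z e)⁻¹
            = swap a w * swap b e := by
          have h1 : swap z e * (swap a w * swap b z) * (swap z e)⁻¹
              = (swap z e * swap a w * (swap z e)⁻¹) * (swap z e * swap b z * (swap z e)⁻¹) := by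
            group
          rw [h1, ← swap_apply_apply, ← swap_apply_apply, swap_apply_left,
            swap_apply_of_ne_of_ne (Ne.symm hza) (fun h => hea h.symm),
            swap_apply_of_ne_of_ne hwz' (fun h => hew h.symm),
            swap_apply_of_ne_of_ne (Ne.symm hzb) (fun h => heb h.symm)]
        have hprodmem : (swap a w * swap b z) * (swap a w * swap b e) ∈ N :=
          mul_mem (hδeq ▸ hδmem) (hδ'eq ▸ hδ'mem)
        have hcomm : Commute (swap a w) (swap b z) :=
          disjoint_swap_commute (Ne.symm hab) (fun h => hwb h.symm) hza (Ne.symm hwz')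
        have hprodeq : (swap a w * swap b z) * (swap a w * swap b e)
            = swap b z * swap b e := by
          rw [hcomm.eq, mul_assoc, ← mul_assoc (swap a w), swap_mul_self, one_mul]
        refine ⟨swap b z * swap b e, hprodeq ▸ hprodmem, ?_⟩
        exact isThreeCycle_swap_mul_swap_same (Ne.symm hzb) (fun h => heb h.symm)
          (fun h => hez h.symm)
    · push_neg at hz
      have hσswap : σ = swap a b := eq_swap_of σ a b hab hb hz
      obtain ⟨z, hzmem⟩ : ∃ z, z ∉ ({a, b} : Finset (Fin n)) := by
        apply exists_fresh
        have k1 := Finset.card_insert_le a ({b} : Finset (Fin n))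
        simp only [Finset.card_singleton] at k1
        omega
      simp only [Finset.mem_insert, Finset.mem_singleton, not_or] at hzmem
      obtain ⟨hza, hzb⟩ := hzmem
      have hδmem : swap b z * σ * (swap b z)⁻¹ ∈ N := hN.conj_mem σ hσN (swap b z)
      have hδeq : swap b z * σ * (swap b z)⁻¹ = swap a z := by
        rw [hσswap, ← swap_apply_apply, swap_apply_left,
          swap_apply_of_ne_of_ne hab (fun h => hza h.symm)]
      refine ⟨σ * (swap b z * σ * (swap b z)⁻¹), mul_mem hσN hδmem, ?_⟩
      rw [hδeq, hσswap]
      exact isThreeCycle_swap_mul_swap_same hab (fun h => hza h.symm) (fun h => hzb h.symm)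
  obtain ⟨c, hcN, hc3⟩ := h3
  intro x hx
  let K : Subgroup (alternatingGroup (Fin n)) := N.comap (alternatingGroup (Fin n)).subtype
  haveI hKn : K.Normal := hN.comap _
  have hcK : (⟨c, hc3.mem_alternatingGroup⟩ : alternatingGroup (Fin n)) ∈ K := hcN
  have htop : Subgroup.normalClosure ({⟨c, hc3.mem_alternatingGroup⟩} : Set (alternatingGroup (Fin n)))
      = ⊤ := hc3.alternating_normalClosure (by rw [Nat.card_eq_fintype_card, Fintype.card_fin]; exact hn5)
  have hmem : (⟨x, hx⟩ : alternatingGroup (Fin n)) ∈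
      Subgroup.normalClosure ({⟨c, hc3.mem_alternatingGroup⟩} : Set (alternatingGroup (Fin n))) := by
    rw [htop]; exact mem_top _
  exact normalClosure_le_normal (Set.singleton_subset_iff.mpr hcK) hmem


lemma graph_absurd {m n : ℕ} (hm : 2 ≤ m) (hmn : m ≤ n) (hn : 5 ≤ n)
    (hmn6 : ¬ (m = 6 ∧ n = 6))
    (H : Subgroup (Equiv.Perm (Fin m) × Equiv.Perm (Fin n)))
    (h1 : Subgroup.map (MonoidHom.fst (Equiv.Perm (Fin m)) (Equiv.Perm (Fin n))) H = ⊤)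
    (h2 : Subgroup.map (MonoidHom.snd (Equiv.Perm (Fin m)) (Equiv.Perm (Fin n))) H = ⊤)
    (htr : ∀ p q : Fin m × Fin n, ∃ h ∈ H, (h.1 p.1, h.2 p.2) = q)
    (hN : ∀ b : Perm (Fin n), ((1 : Perm (Fin m)), b) ∈ H → b = 1) : False := by
  set φ : H →* Perm (Fin m) := (MonoidHom.fst (Perm (Fin m)) (Perm (Fin n))).comp H.subtype
    with hφdef
  set ψ : H →* Perm (Fin n) := (MonoidHom.snd (Perm (Fin m)) (Perm (Fin n))).comp H.subtype
    with hψdef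
  have hφs : Function.Surjective φ := by
    intro σ
    have hσ : σ ∈ Subgroup.map (MonoidHom.fst (Perm (Fin m)) (Perm (Fin n))) H := by
      rw [h1]; exact mem_top σ
    obtain ⟨h, hH, hh⟩ := hσ
    exact ⟨⟨h, hH⟩, hh⟩
  have hψs : Function.Surjective ψ := by
    intro σ
    have hσ : σ ∈ Subgroup.map (MonoidHom.snd (Perm (Fin m)) (Perm (Fin n))) H := by
      rw [h2]; exact mem_top σ
    obtain ⟨h, hH, hh⟩ := hσ
    exact ⟨⟨h, hH⟩, hh⟩
  have hφi : Function.Injective φ := by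
    rw [injective_iff_map_eq_one]
    intro x hx
    have hx1 : (x : Perm (Fin m) × Perm (Fin n)).1 = 1 := hx
    have hx2 : (x : Perm (Fin m) × Perm (Fin n)).2 = 1 := by
      apply hN
      have : ((1 : Perm (Fin m)), (x : Perm (Fin m) × Perm (Fin n)).2)
          = (x : Perm (Fin m) × Perm (Fin n)) := Prod.ext hx1.symm rfl
      rw [this]
      exact x.2
    exact Subtype.ext (Prod.ext hx1 hx2)
  have cardPm : Nat.card (Perm (Fin m)) = m.factorial := by
    simp [Nat.card_eq_fintype_card, Fintype.card_perm]
  have cardPn : Nat.card (Perm (Fin n)) = n.factorial := by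
    simp [Nat.card_eq_fintype_card, Fintype.card_perm]
  have hle1 : Nat.card H ≤ m.factorial := cardPm ▸ Nat.card_le_card_of_injective φ hφi
  have hge2 : n.factorial ≤ Nat.card H := cardPn ▸ Nat.card_le_card_of_surjective ψ hψs
  have hfacle : m.factorial ≤ n.factorial := Nat.factorial_le hmn
  have hmeq : m = n := by
    by_contra hne
    have : m.factorial < n.factorial := (Nat.factorial_lt (by omega)).mpr
      (lt_of_le_of_ne hmn hne)
    omega
  subst hmeq
  have hm6 : m ≠ 6 := fun h => hmn6 ⟨h, h⟩
  haveI : NeZero m := ⟨by omega⟩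
  have hψi : Function.Injective ψ := by
    have hcard : Nat.card H = Nat.card (Perm (Fin m)) := by rw [cardPm]; omega
    exact ((Nat.bijective_iff_surjective_and_card ψ).mpr ⟨hψs, hcard⟩).1
  set f : Perm (Fin m) ≃* Perm (Fin m) :=
    (MulEquiv.ofBijective φ ⟨hφi, hφs⟩).symm.trans (MulEquiv.ofBijective ψ ⟨hψi, hψs⟩)
    with hfdef
  have hf : ∀ x : H, f ((x : Perm (Fin m) × Perm (Fin m)).1)
      = (x : Perm (Fin m) × Perm (Fin m)).2 := by
    intro x
    have hsymm : (MulEquiv.ofBijective φ ⟨hφi, hφs⟩).symm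
        ((x : Perm (Fin m) × Perm (Fin m)).1) = x := by
      apply (MulEquiv.ofBijective φ ⟨hφi, hφs⟩).injective
      rw [MulEquiv.apply_symm_apply]
      rfl
    show (MulEquiv.ofBijective ψ ⟨hψi, hψs⟩)
        ((MulEquiv.ofBijective φ ⟨hφi, hφs⟩).symm ((x : Perm (Fin m) × Perm (Fin m)).1))
        = (x : Perm (Fin m) × Perm (Fin m)).2
    rw [hsymm]
    rfl
  set S : Set (Perm (Fin m)) := {τ | IsSwap τ ∧ τ 0 = 0} with hSdef
  have hS : ∀ τ ∈ S, IsSwap τ := fun τ hτ => hτ.1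
  have hstab : ∀ a : Perm (Fin m), a ∈ closure S → a 0 = 0 := by
    intro a haS
    have hle : closure S ≤ MulAction.stabilizer (Perm (Fin m)) (0 : Fin m) := by
      rw [closure_le]
      intro τ hτ
      exact MulAction.mem_stabilizer_iff.mpr hτ.2
    exact hle haS
  have hmem_closure : ∀ a : Perm (Fin m), a 0 = 0 → a ∈ closure S := by
    intro a ha0
    rw [mem_closure_isSwap hS]
    refine ⟨Set.toFinite _, fun x => ?_⟩
    by_cases hax : a x = x
    · rw [hax]; exact MulAction.mem_orbit_self x
    · have hx0 : x ≠ 0 := fun h => hax (by rw [h, ha0])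
      have hax0 : a x ≠ 0 := fun h => hx0 (a.injective (h.trans ha0.symm))
      refine ⟨⟨swap x (a x), subset_closure ⟨⟨x, a x, fun h => hax h.symm, rfl⟩, ?_⟩⟩, ?_⟩
      · exact swap_apply_of_ne_of_ne (Ne.symm hx0) (Ne.symm hax0)
      · exact swap_apply_left x (a x)
  have hpre : MulAction.IsPretransitive (closure (f.toMonoidHom '' S)) (Fin m) := by
    constructor
    intro y y'
    obtain ⟨h, hH, hhy⟩ := htr (0, y) (0, y')
    have hh1 : h.1 0 = 0 := congrArg Prod.fst hhy
    have hh2 : h.2 y = y' := congrArg Prod.snd hhy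
    have hmem : h.2 ∈ closure (f.toMonoidHom '' S) := by
      rw [← MonoidHom.map_closure]
      exact ⟨h.1, hmem_closure _ hh1, hf ⟨h, hH⟩⟩
    exact ⟨⟨h.2, hmem⟩, hh2⟩
  haveI := hpre
  have htop : closure (f.toMonoidHom '' S) = ⊤ := by
    apply closure_of_isSwap_of_isPretransitive
    rintro τ ⟨t, htS, rfl⟩
    exact keyswap hn hm6 f (hS t htS)
  have hScl : closure S = ⊤ := by
    rw [eq_top_iff]
    intro a _
    have hfa : f a ∈ closure (f.toMonoidHom '' S) := htop ▸ mem_top _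
    rw [← MonoidHom.map_closure] at hfa
    obtain ⟨a', ha', hfa'⟩ := hfa
    have : a' = a := f.injective hfa'
    exact this ▸ ha'
  haveI : Nontrivial (Fin m) := Fin.nontrivial_iff_two_le.mpr (by omega)
  obtain ⟨o, ho⟩ := exists_ne (0 : Fin m)
  have h01 : (swap (0 : Fin m) o) 0 = 0 := hstab _ (hScl ▸ mem_top _)
  rw [swap_apply_left] at h01
  exact ho h01


end Stmt10Aux

/-- Let `2 ≤ m ≤ n`, `5 ≤ n`, `(m,n) ≠ (6,6)`, and let `H ≤ S_m × S_n` have both projections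
surjective and act transitively on the product. Then `H` acts transitively on the unordered
pairs of points differing in both coordinates, on those agreeing in the first coordinate, and
on those agreeing in the second coordinate. -/
theorem stmt10 (m n : ℕ) (hm : 2 ≤ m) (hmn : m ≤ n) (hn : 5 ≤ n)
    (hmn6 : ¬ (m = 6 ∧ n = 6))
    (H : Subgroup (Equiv.Perm (Fin m) × Equiv.Perm (Fin n)))
    (h1 : Subgroup.map (MonoidHom.fst (Equiv.Perm (Fin m)) (Equiv.Perm (Fin n))) H = ⊤)
    (h2 : Subgroup.map (MonoidHom.snd (Equiv.Perm (Fin m)) (Equiv.Perm (Fin n))) H = ⊤)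
    (htr : ∀ p q : Fin m × Fin n, ∃ h ∈ H, (h.1 p.1, h.2 p.2) = q) :
    (∀ p1 p2 q1 q2 : Fin m × Fin n,
      p1.1 ≠ p2.1 → p1.2 ≠ p2.2 → q1.1 ≠ q2.1 → q1.2 ≠ q2.2 →
      ∃ h ∈ H, ({(h.1 p1.1, h.2 p1.2), (h.1 p2.1, h.2 p2.2)} : Set (Fin m × Fin n))
        = {q1, q2}) ∧
    (∀ p1 p2 q1 q2 : Fin m × Fin n,
      p1.1 = p2.1 → p1.2 ≠ p2.2 → q1.1 = q2.1 → q1.2 ≠ q2.2 →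
      ∃ h ∈ H, ({(h.1 p1.1, h.2 p1.2), (h.1 p2.1, h.2 p2.2)} : Set (Fin m × Fin n))
        = {q1, q2}) ∧
    (∀ p1 p2 q1 q2 : Fin m × Fin n,
      p1.1 ≠ p2.1 → p1.2 = p2.2 → q1.1 ≠ q2.1 → q1.2 = q2.2 →
      ∃ h ∈ H, ({(h.1 p1.1, h.2 p1.2), (h.1 p2.1, h.2 p2.2)} : Set (Fin m × Fin n))
        = {q1, q2}) := by
  by_cases hNtriv : ∀ b : Perm (Fin n), ((1 : Perm (Fin m)), b) ∈ H → b = 1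
  · exact (graph_absurd hm hmn hn hmn6 H h1 h2 htr hNtriv).elim
  push_neg at hNtriv
  obtain ⟨b0, hb0H, hb0ne⟩ := hNtriv
  set N : Subgroup (Perm (Fin n)) :=
    { carrier := {b | ((1 : Perm (Fin m)), b) ∈ H}
      mul_mem' := fun {x y} hx hy => by
        have hmul := H.mul_mem hx hy
        have heq : ((1 : Perm (Fin m)), x) * (1, y) = ((1 : Perm (Fin m)), x * y) := by
          rw [Prod.mk_mul_mk, one_mul]
        rwa [heq] at hmul
      one_mem' := H.one_mem
      inv_mem' := fun {x} hx => by
        have hinv := H.inv_mem hx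
        have heq : ((1 : Perm (Fin m)), x)⁻¹ = ((1 : Perm (Fin m)), x⁻¹) := by
          rw [Prod.inv_mk, inv_one]
        rwa [heq] at hinv } with hNdef
  have hNnormal : N.Normal := by
    constructor
    intro b hb c
    have hc : c ∈ Subgroup.map (MonoidHom.snd (Perm (Fin m)) (Perm (Fin n))) H := by
      rw [h2]; exact mem_top c
    obtain ⟨h, hH, hh⟩ := hc
    have hmul := H.mul_mem (H.mul_mem hH hb) (H.inv_mem hH)
    have heq : h * ((1 : Perm (Fin m)), b) * h⁻¹ = ((1 : Perm (Fin m)), c * b * c⁻¹) := by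
      obtain ⟨ha, hc'⟩ := h
      simp only [Prod.mk_mul_mk, Prod.inv_mk, Prod.mk.injEq] at hh ⊢
      have hh' : hc' = c := hh
      exact ⟨by group, by rw [hh']⟩
    rwa [heq] at hmul
  have hA : alternatingGroup (Fin n) ≤ N :=
    normal_alternating_le hn N hNnormal hb0H hb0ne
  have main : ∀ (σ : Perm (Fin m)) (y1 y2 y1' y2' : Fin n), y1 ≠ y2 → y1' ≠ y2' →
      ∃ τ, (σ, τ) ∈ H ∧ τ y1 = y1' ∧ τ y2 = y2' := by
    intro σ y1 y2 y1' y2' h12 h12'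
    have hσ : σ ∈ Subgroup.map (MonoidHom.fst (Perm (Fin m)) (Perm (Fin n))) H := by
      rw [h1]; exact mem_top σ
    obtain ⟨h0, hH0, hh0⟩ := hσ
    have hh0' : h0.1 = σ := hh0
    obtain ⟨τ1, hτ1a, hτ1b⟩ := exists_two_points y1 y2 y1' y2' h12 h12'
    have hcard2 : 1 < (Finset.univ \ ({y1', y2'} : Finset (Fin n))).card := by
      have hc2 : ({y1', y2'} : Finset (Fin n)).card ≤ 2 := by
        have := Finset.card_insert_le y1' ({y2'} : Finset (Fin n))
        simpa using this
      rw [Finset.card_sdiff, Finset.inter_univ, Finset.card_univ, Fintype.card_fin]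
      omega
    obtain ⟨z1, hz1, z2, hz2, hz12⟩ := Finset.one_lt_card.mp hcard2
    simp only [Finset.mem_sdiff, Finset.mem_insert, Finset.mem_singleton, not_or] at hz1 hz2
    obtain ⟨-, hz1a, hz1b⟩ := hz1
    obtain ⟨-, hz2a, hz2b⟩ := hz2
    set τ : Perm (Fin n) := if Perm.sign τ1 = Perm.sign h0.2 then τ1 else swap z1 z2 * τ1
      with hτdef
    have hτ1 : τ y1 = y1' := by
      rw [hτdef]
      split
      · exact hτ1a
      · rw [mul_apply, hτ1a, swap_apply_of_ne_of_ne (fun h => hz1a h.symm)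
          (fun h => hz2a h.symm)]
    have hτ2 : τ y2 = y2' := by
      rw [hτdef]
      split
      · exact hτ1b
      · rw [mul_apply, hτ1b, swap_apply_of_ne_of_ne (fun h => hz1b h.symm)
          (fun h => hz2b h.symm)]
    have hsign : Perm.sign τ = Perm.sign h0.2 := by
      rw [hτdef]
      split
      · assumption
      · rename_i hne
        rw [map_mul, sign_swap hz12]
        rcases Int.units_eq_one_or (Perm.sign τ1) with h | h <;>
          rcases Int.units_eq_one_or (Perm.sign h0.2) with h' | h' <;>
          rw [h, h'] <;> first | rfl | (exfalso; rw [h, h'] at hne; exact hne rfl)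
    have hbmem : ((1 : Perm (Fin m)), τ * h0.2⁻¹) ∈ H := by
      apply hA
      rw [mem_alternatingGroup, map_mul, map_inv, hsign, mul_inv_cancel]
    have hfin := H.mul_mem hbmem hH0
    have heq : ((1 : Perm (Fin m)), τ * h0.2⁻¹) * h0 = (σ, τ) := by
      rw [show h0 = (h0.1, h0.2) from rfl, Prod.mk_mul_mk, one_mul, inv_mul_cancel_right, hh0']
    rw [heq] at hfin
    exact ⟨τ, hfin, hτ1, hτ2⟩
  haveI : Nontrivial (Fin n) := Fin.nontrivial_iff_two_le.mpr (by omega)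
  have main' : ∀ (σ : Perm (Fin m)) (y1 y1' : Fin n), ∃ τ, (σ, τ) ∈ H ∧ τ y1 = y1' := by
    intro σ y1 y1'
    obtain ⟨y2, hy2⟩ := exists_ne y1
    obtain ⟨y2', hy2'⟩ := exists_ne y1'
    obtain ⟨τ, hmem, hv1, -⟩ := main σ y1 y2 y1' y2' (Ne.symm hy2) (Ne.symm hy2')
    exact ⟨τ, hmem, hv1⟩
  refine ⟨?_, ?_, ?_⟩
  · intro p1 p2 q1 q2 hp1 hp2 hq1 hq2
    obtain ⟨σ, hσ1, hσ2⟩ := exists_two_points p1.1 p2.1 q1.1 q2.1 hp1 hq1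
    obtain ⟨τ, hmem, hv1, hv2⟩ := main σ p1.2 p2.2 q1.2 q2.2 hp2 hq2
    refine ⟨(σ, τ), hmem, ?_⟩
    show ({(σ p1.1, τ p1.2), (σ p2.1, τ p2.2)} : Set (Fin m × Fin n)) = {q1, q2}
    rw [show (σ p1.1, τ p1.2) = q1 from Prod.ext hσ1 hv1,
      show (σ p2.1, τ p2.2) = q2 from Prod.ext hσ2 hv2]
  · intro p1 p2 q1 q2 hp1 hp2 hq1 hq2
    obtain ⟨τ, hmem, hv1, hv2⟩ := main (swap p1.1 q1.1) p1.2 p2.2 q1.2 q2.2 hp2 hq2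
    refine ⟨(swap p1.1 q1.1, τ), hmem, ?_⟩
    show ({(swap p1.1 q1.1 p1.1, τ p1.2), (swap p1.1 q1.1 p2.1, τ p2.2)} :
      Set (Fin m × Fin n)) = {q1, q2}
    rw [show (swap p1.1 q1.1 p1.1, τ p1.2) = q1 from Prod.ext (by rw [swap_apply_left]) hv1,
      show (swap p1.1 q1.1 p2.1, τ p2.2) = q2 from
        Prod.ext (by rw [← hp1, swap_apply_left, hq1]) hv2]
  · intro p1 p2 q1 q2 hp1 hp2 hq1 hq2
    obtain ⟨σ, hσ1, hσ2⟩ := exists_two_points p1.1 p2.1 q1.1 q2.1 hp1 hq1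
    obtain ⟨τ, hmem, hv1⟩ := main' σ p1.2 q1.2
    refine ⟨(σ, τ), hmem, ?_⟩
    show ({(σ p1.1, τ p1.2), (σ p2.1, τ p2.2)} : Set (Fin m × Fin n)) = {q1, q2}
    rw [show (σ p1.1, τ p1.2) = q1 from Prod.ext hσ1 hv1,
      show (σ p2.1, τ p2.2) = q2 from Prod.ext hσ2 (by rw [← hp2, hv1, hq2])]
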